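/- arXiv:2409.06895 — 7 statements merged into one kernel-verified Lean document; each statement's English description precedes it below -/
import Mathlib

section
/- Let K, g, τ ≥ 0 all positive and a > 0 with a ≠ g. Define x(a) = a·g·(1 - exp(K·(a-g))) / (g - a·exp(K·(a-g))). Then the derivative of x with respect to a is g·(g - exp(K·(a-g))·(K·a·(g-a) + g)) / (g - a·exp(K·(a-g)))², and this derivative is strictly positive. -/
theorem depletion_model_deriv_pos
    (K g a : ℝ) (hK : 0 < K) (hg : 0 < g) (ha : 0 < a) (hne : a ≠ g) :
    HasDerivAt (fun a : ℝ => a * g * (1 - Real.exp (K * (a - g))) /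
        (g - a * Real.exp (K * (a - g))))
      (g * (g - Real.exp (K * (a - g)) * (K * a * (g - a) + g)) /
        (g - a * Real.exp (K * (a - g))) ^ 2) a ∧
    0 < g * (g - Real.exp (K * (a - g)) * (K * a * (g - a) + g)) /
        (g - a * Real.exp (K * (a - g))) ^ 2 := by
  have ht : K * (a - g) ≠ 0 := by
    intro h
    rcases mul_eq_zero.mp h with h | h
    · exact hK.ne' h
    · exact hne (by linarith [sub_eq_zero.mp h])
  set t := K * (a - g) with ht_def
  set E := Real.exp t with hE_def
  have hE : 0 < E := Real.exp_pos t
  -- key inequality: t * E - E + 1 > 0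
  have h1 : 0 < t * E - E + 1 := by
    have h2 := Real.add_one_lt_exp (neg_ne_zero.mpr ht)
    rw [Real.exp_neg] at h2
    have h3 : E * (-t + 1) < 1 := by
      have := (mul_lt_mul_iff_right₀ hE).mpr h2
      rwa [mul_inv_cancel₀ hE.ne'] at this
    nlinarith
  -- denominator nonzero
  have hD : g - a * E ≠ 0 := by
    rcases lt_or_gt_of_ne hne with h | h
    · have htneg : t < 0 := mul_neg_of_pos_of_neg hK (by linarith)
      have hlt : E < 1 := Real.exp_lt_one_iff.mpr htneg
      have : a * E < a := by nlinarith
      intro hzero; nlinarith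
    · have htpos : 0 < t := mul_pos hK (by linarith)
      have hgt : 1 < E := by
        have := Real.add_one_lt_exp (ne_of_gt htpos); rw [hE_def]; linarith
      have : a < a * E := by nlinarith
      intro hzero; nlinarith
  have hDsq : 0 < (g - a * E) ^ 2 := pow_two_pos_of_ne_zero hD
  -- numerator positive
  have hnum : 0 < g - E * (K * a * (g - a) + g) := by
    have hid : g - E * (K * a * (g - a) + g)
        = t * E * (a - g) + g * (t * E - E + 1) := by rw [ht_def]; ring
    rw [hid]
    have h5 : 0 < t * (a - g) := by
      have heq : t * (a - g) = K * (a - g) ^ 2 := by rw [ht_def]; ring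
      rw [heq]
      exact mul_pos hK (pow_two_pos_of_ne_zero (sub_ne_zero.mpr hne))
    nlinarith [mul_pos hg h1]
  have hlin : HasDerivAt (fun x : ℝ => K * (x - g)) K a := by
    simpa using ((hasDerivAt_id a).sub_const g).const_mul K
  have hexp : HasDerivAt (fun x : ℝ => Real.exp (K * (x - g))) (E * K) a := by
    simpa [hE_def, ht_def] using hlin.exp
  have hN : HasDerivAt (fun x : ℝ => x * g * (1 - Real.exp (K * (x - g))))
      (g * (1 - E) + a * g * (-(E * K))) a := by
    have h := ((hasDerivAt_id a).mul_const g).mul ((hasDerivAt_const a (1:ℝ)).sub hexp)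
    refine h.congr_deriv ?_
    simp [hE_def, ht_def]
  have hDen : HasDerivAt (fun x : ℝ => g - x * Real.exp (K * (x - g)))
      (-(E + a * (E * K))) a := by
    have h := (hasDerivAt_const a g).sub ((hasDerivAt_id a).mul hexp)
    refine h.congr_deriv ?_
    simp [hE_def, ht_def]
  have hQ := hN.div hDen hD
  constructor
  · refine hQ.congr_deriv ?_
    rw [div_eq_div_iff (by positivity) (by positivity)]
    ring
  · exact div_pos (mul_pos hg hnum) hDsq
end

section
/- Let K, g > 0 and a > 0 with a < g. Define the depletion accumulation model x(a) = a·g·(1 - exp(K·(a-g))) / (g - a·exp(K·(a-g))), the Langmuir isotherm x_L(a) = g/(1 + 1/(K·a)), and the depletion-free model x_DF(a) = g·(1 - exp(-K·a)). Then x(a) < x_L(a) < x_DF(a). -/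
theorem model_inequalities_lt
    (K g a : ℝ) (hK : 0 < K) (hg : 0 < g) (ha : 0 < a) (hlt : a < g) :
    a * g * (1 - Real.exp (K * (a - g))) / (g - a * Real.exp (K * (a - g))) <
      g / (1 + 1 / (K * a)) ∧
    g / (1 + 1 / (K * a)) < g * (1 - Real.exp (-(K * a))) := by
  have hKa : 0 < K * a := mul_pos hK ha
  have hQ : (1 : ℝ) + 1 / (K * a) = (K * a + 1) / (K * a) := by field_simp
  have hQR : g / (1 + 1 / (K * a)) = g * (K * a) / (K * a + 1) := by
    rw [hQ]; field_simp
  have hKap : 0 < K * a + 1 := by linarith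
  set E := Real.exp (K * (a - g)) with hE
  have hE0 : 0 < E := Real.exp_pos _
  have hE1 : E < 1 := by
    rw [hE, Real.exp_lt_one_iff]
    nlinarith
  have hD : 0 < g - a * E := by nlinarith
  have key1 : 1 - K * (g - a) < E := by
    have := Real.add_one_lt_exp (x := K * (a - g)) (by nlinarith)
    rw [← hE] at this
    nlinarith
  constructor
  · rw [hQR, div_lt_div_iff₀ hD hKap]
    nlinarith [mul_pos hK (sub_pos.mpr hlt), mul_pos ha hg, mul_pos hKa hg]
  · rw [hQR, div_lt_iff₀ hKap]
    set F := Real.exp (-(K * a)) with hF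
    have hF0 : 0 < F := Real.exp_pos _
    have hFe : F * Real.exp (K * a) = 1 := by
      rw [hF, ← Real.exp_add]; simp
    have key2 : K * a + 1 < Real.exp (K * a) := Real.add_one_lt_exp hKa.ne'
    nlinarith [mul_lt_mul_of_pos_left key2 hF0, mul_pos hF0 hKap, hg.le]
end

section
/- Let K, g > 0 and a > 0 with a > g. Define x(a) = a·g·(1 - exp(K·(a-g))) / (g - a·exp(K·(a-g))), x_L(a) = g/(1 + 1/(K·a)), x_DF(a) = g·(1 - exp(-K·a)). Then x_L(a) < x(a) < x_DF(a). -/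
theorem model_inequalities_gt
    (K g a : ℝ) (hK : 0 < K) (hg : 0 < g) (ha : 0 < a) (hgt : g < a) :
    g / (1 + 1 / (K * a)) <
      a * g * (1 - Real.exp (K * (a - g))) / (g - a * Real.exp (K * (a - g))) ∧
    a * g * (1 - Real.exp (K * (a - g))) / (g - a * Real.exp (K * (a - g))) <
      g * (1 - Real.exp (-(K * a))) := by
  set E := Real.exp (K * (a - g)) with hEdef
  have hexp : K * (a - g) + 1 < E := by
    rw [hEdef]
    exact Real.add_one_lt_exp (mul_pos hK (sub_pos.2 hgt)).ne'
  have hE1 : 1 < E := by nlinarith [mul_pos hK (sub_pos.2 hgt)]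
  have hKa : 0 < K * a := by positivity
  have hKa' : (K * a) ≠ 0 := ne_of_gt hKa
  have hden : 0 < a * E - g := by nlinarith
  have hrw : a * g * (1 - E) / (g - a * E) = a * g * (E - 1) / (a * E - g) := by
    rw [show a * g * (1 - E) = -(a * g * (E - 1)) by ring,
        show g - a * E = -(a * E - g) by ring, neg_div_neg_eq]
  rw [hrw]
  constructor
  · have h1 : (0:ℝ) < 1 + 1 / (K * a) := by positivity
    rw [div_lt_div_iff₀ h1 hden, ← mul_lt_mul_iff_right₀ hKa,
        show K * a * (a * g * (E - 1) * (1 + 1 / (K * a)))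
          = K * a * (a * g * (E - 1)) + a * g * (E - 1) * (K * a / (K * a)) by ring,
        div_self hKa']
    nlinarith [mul_lt_mul_of_pos_left hexp (mul_pos ha hg)]
  · rw [div_lt_iff₀ hden]
    have hrel : Real.exp (-(K * a)) * E = Real.exp (-(K * g)) := by
      rw [hEdef, ← Real.exp_add]; ring_nf
    have hkey := (strictConvexOn_exp.2 (Set.mem_univ 0) (Set.mem_univ (-(K * a)))
      (by nlinarith : (0:ℝ) ≠ -(K * a))
      (by nlinarith [div_lt_one ha |>.mpr hgt] : 0 < 1 - g / a)
      (by positivity : 0 < g / a) (by ring))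
    simp only [smul_eq_mul, mul_zero, Real.exp_zero, mul_one] at hkey
    have hga : g / a * -(K * a) = -(K * g) := by field_simp
    rw [zero_add, hga] at hkey
    -- hkey : exp(-(K*g)) < (1 - g/a) + g/a * exp(-(K*a))
    have hkey' : a * Real.exp (-(K * g)) < (a - g) + g * Real.exp (-(K * a)) := by
      have h2 := mul_lt_mul_of_pos_left hkey ha
      have hane : a ≠ 0 := ne_of_gt ha
      calc a * Real.exp (-(K * g)) < a * (1 - g / a + g / a * Real.exp (-(K * a))) := h2
        _ = (a - g) + g * Real.exp (-(K * a)) := by field_simp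
    have hrel' : g * a * (Real.exp (-(K * a)) * E) = g * a * Real.exp (-(K * g)) := by
      rw [hrel]
    nlinarith [hrel', mul_lt_mul_of_pos_left hkey' hg]
end

section
/- Let N ≥ 1, g_i > 0, k_i > 0 for i = 1,…,N, a > 0, and let x : [0, ξ) → ℝ^N be differentiable with x(0) = 0 and x_i'(t) = k_i·(a - Σⱼ x_j(t))·(g_i - x_i(t)) for all i and all t ∈ [0, ξ). Then for every i and every t ∈ [0, ξ), x_i(t) = g_i·(1 - exp(-k_i·∫₀ᵗ (a - Σⱼ x_j(s)) ds)). -/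
theorem multi_epitope_integral_representation
    (N : ℕ) (hN : 1 ≤ N) (g k : Fin N → ℝ) (hg : ∀ i, 0 < g i) (hk : ∀ i, 0 < k i)
    (a : ℝ) (ha : 0 < a) (ξ : ℝ) (hξ : 0 < ξ)
    (x : ℝ → Fin N → ℝ) (hx0 : ∀ i, x 0 i = 0)
    (hode : ∀ i, ∀ t ∈ Set.Ico (0 : ℝ) ξ,
      HasDerivWithinAt (fun s => x s i)
        (k i * (a - ∑ j, x t j) * (g i - x t i)) (Set.Ico (0 : ℝ) ξ) t) :
    ∀ i, ∀ t ∈ Set.Ico (0 : ℝ) ξ,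
      x t i = g i * (1 - Real.exp (-(k i) * ∫ s in (0 : ℝ)..t, (a - ∑ j, x s j))) := by
  intro i t ht
  set T : ℝ := (t + ξ) / 2 with hTdef
  have htT : t < T := by simp [hTdef]; linarith [ht.2]
  have hTξ : T < ξ := by simp [hTdef]; linarith [ht.2]
  have hT0 : (0:ℝ) ≤ T := le_trans ht.1 htT.le
  have hsub : Set.Icc (0:ℝ) T ⊆ Set.Ico (0:ℝ) ξ :=
    fun u hu => ⟨hu.1, lt_of_le_of_lt hu.2 hTξ⟩
  have hfc : ContinuousOn (fun s => a - ∑ j, x s j) (Set.Ico (0:ℝ) ξ) := by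
    apply continuousOn_const.sub
    exact continuousOn_finset_sum _ fun j _ s hs => (hode j s hs).continuousWithinAt
  set f : ℝ → ℝ := fun s => a - ∑ j, x s j with hfdef
  set F : ℝ → ℝ := fun u => ∫ s in (0:ℝ)..u, f s with hFdef
  have hfcT : ContinuousOn f (Set.Icc (0:ℝ) T) := hfc.mono hsub
  have hFd : ∀ s ∈ Set.Icc (0:ℝ) T, HasDerivWithinAt F (f s) (Set.Icc (0:ℝ) T) s := by
    intro s hs
    haveI : Fact (s ∈ Set.Icc (0:ℝ) T) := ⟨hs⟩
    apply intervalIntegral.integral_hasDerivWithinAt_right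
    · apply ContinuousOn.intervalIntegrable
      apply hfcT.mono
      rw [Set.uIcc_of_le hs.1]
      exact fun u hu => ⟨hu.1, le_trans hu.2 hs.2⟩
    · exact hfcT.stronglyMeasurableAtFilter_nhdsWithin measurableSet_Icc s
    · exact hfcT s hs
  set h : ℝ → ℝ := fun u => (g i - x u i) * Real.exp (k i * F u) with hhdef
  have hder : ∀ s ∈ Set.Icc (0:ℝ) T, HasDerivWithinAt h 0 (Set.Icc (0:ℝ) T) s := by
    intro s hs
    have h1 := ((hode i s (hsub hs)).mono hsub).const_sub (g i)
    have h2 := ((hFd s hs).const_mul (k i)).exp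
    have h3 := h1.mul h2
    refine h3.congr_deriv ?_
    simp only [hfdef]
    ring
  have hcont : ContinuousOn h (Set.Icc 0 t) := by
    intro u hu
    have hu' : u ∈ Set.Icc (0:ℝ) T := ⟨hu.1, le_trans hu.2 htT.le⟩
    exact ((hder u hu').continuousWithinAt).mono
      (fun v hv => ⟨hv.1, le_trans hv.2 htT.le⟩)
  have hrd : ∀ u ∈ Set.Ico (0:ℝ) t, HasDerivWithinAt h 0 (Set.Ici u) u := by
    intro u hu
    have hu' : u ∈ Set.Icc (0:ℝ) T := ⟨hu.1, (hu.2.trans htT).le⟩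
    refine (hder u hu').mono_of_mem_nhdsWithin ?_
    refine Filter.mem_of_superset
      (inter_mem_nhdsWithin (Set.Ici u) (Iio_mem_nhds (hu.2.trans htT))) ?_
    exact fun v hv => ⟨le_trans hu'.1 hv.1, hv.2.le⟩
  have key : h t = h 0 :=
    constant_of_has_deriv_right_zero hcont hrd t ⟨ht.1, le_refl t⟩
  have hF0 : F 0 = 0 := intervalIntegral.integral_same
  have hh0 : h 0 = g i := by simp [hhdef, hx0 i, hF0]
  rw [hh0] at key
  have hE : Real.exp (k i * F t) ≠ 0 := Real.exp_ne_zero _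
  have hneg : Real.exp (-(k i) * F t) = (Real.exp (k i * F t))⁻¹ := by
    rw [← Real.exp_neg]; ring_nf
  have hkey : (g i - x t i) * Real.exp (k i * F t) = g i := key
  show x t i = g i * (1 - Real.exp (-(k i) * F t))
  rw [hneg]
  field_simp
  nlinarith [hkey]
end

section
/- Let x : [0, ξ) → ℝ^N solve the depletion accumulation IVP x_i'(t) = k_i·(a - Σⱼ x_j(t))·(g_i - x_i(t)), x(0) = 0, with all g_i, k_i, a > 0. If at some time t ∈ [0, ξ) there exists an index i with x_i'(t) = 0, then x_j'(t) = 0 for all indices j. -/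
theorem multi_epitope_derivs_vanish_simultaneously
    (N : ℕ) (hN : 1 ≤ N) (g k : Fin N → ℝ) (hg : ∀ i, 0 < g i) (hk : ∀ i, 0 < k i)
    (a : ℝ) (ha : 0 < a) (ξ : ℝ) (hξ : 0 < ξ)
    (x : ℝ → Fin N → ℝ) (hx0 : ∀ i, x 0 i = 0)
    (hode : ∀ i, ∀ t ∈ Set.Ico (0 : ℝ) ξ,
      HasDerivWithinAt (fun s => x s i)
        (k i * (a - ∑ j, x t j) * (g i - x t i)) (Set.Ico (0 : ℝ) ξ) t)
    (t : ℝ) (ht : t ∈ Set.Ico (0 : ℝ) ξ)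
    (i : Fin N) (hi : k i * (a - ∑ j, x t j) * (g i - x t i) = 0) :
    ∀ j : Fin N, k j * (a - ∑ l, x t l) * (g j - x t j) = 0 := by
  obtain ⟨ht0, htξ⟩ := ht
  have hsub : Set.Icc (0 : ℝ) t ⊆ Set.Ico (0 : ℝ) ξ :=
    fun u hu => ⟨hu.1, lt_of_le_of_lt hu.2 htξ⟩
  -- continuity of each component on [0, t]
  have hcont : ∀ j, ContinuousOn (fun u => x u j) (Set.Icc (0 : ℝ) t) := by
    intro j u hu
    exact ((hode j u (hsub hu)).continuousWithinAt).mono hsub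
  -- key claim : x t i ≠ g i
  have hne : x t i ≠ g i := by
    intro heq
    set c : ℝ → ℝ := fun u => k i * (a - ∑ j, x u j) with hc
    have hccont : ContinuousOn c (Set.Icc (0 : ℝ) t) := by
      apply continuousOn_const.mul
      apply continuousOn_const.sub
      exact continuousOn_finset_sum _ (fun j _ => hcont j)
    obtain ⟨K, hK⟩ := (isCompact_Icc).exists_bound_of_continuousOn hccont
    set h : ℝ → ℝ := fun s => g i - x (t - s) i with hh
    have hmap : Set.MapsTo (fun s : ℝ => t - s) (Set.Icc (0 : ℝ) t) (Set.Icc (0 : ℝ) t) :=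
      fun s hs => by simp only [Set.mem_Icc] at *; constructor <;> linarith
    have hfc : ContinuousOn h (Set.Icc (0 : ℝ) t) := by
      apply continuousOn_const.sub
      exact (hcont i).comp (continuous_const.sub continuous_id).continuousOn hmap
    have hf' : ∀ s ∈ Set.Ico (0 : ℝ) t,
        HasDerivWithinAt h (c (t - s) * h s) (Set.Ici s) s := by
      intro s hs
      have hu : (t - s) ∈ Set.Ico (0 : ℝ) ξ :=
        ⟨by linarith [hs.2], by linarith [hs.1]⟩
      have hd := (hode i (t - s) hu).mono hsub
      have hφ : HasDerivWithinAt (fun s' : ℝ => t - s') (-1) (Set.Icc s t) s := by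
        simpa using ((hasDerivAt_id s).const_sub t).hasDerivWithinAt
      have hmap2 : Set.MapsTo (fun s' : ℝ => t - s') (Set.Icc s t) (Set.Icc (0 : ℝ) t) :=
        fun s' hs' => by
          simp only [Set.mem_Icc] at *
          obtain ⟨h1, h2⟩ := hs'
          exact ⟨by linarith, by linarith [hs.1]⟩
      have hcomp := HasDerivWithinAt.scomp s hd hφ hmap2
      have hder : HasDerivWithinAt h
          (k i * (a - ∑ j, x (t - s) j) * (g i - x (t - s) i)) (Set.Icc s t) s := by
        have := hcomp.const_sub (g i)
        simp only [neg_smul, one_smul, neg_neg] at this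
        exact this
      have hmem : Set.Icc s t ∈ nhdsWithin s (Set.Ici s) :=
        Icc_mem_nhdsGE_of_mem ⟨le_refl s, hs.2⟩
      exact (hder.mono_of_mem_nhdsWithin hmem).congr_deriv (by simp [hc, hh])
    have ha0 : ‖h 0‖ ≤ 0 := by simp [hh, heq]
    have bound : ∀ s ∈ Set.Ico (0 : ℝ) t, ‖c (t - s) * h s‖ ≤ K * ‖h s‖ + 0 := by
      intro s hs
      rw [norm_mul, add_zero]
      exact mul_le_mul_of_nonneg_right
        (hK _ ⟨by linarith [hs.2], by linarith [hs.1]⟩) (norm_nonneg _)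
    have hfin := norm_le_gronwallBound_of_norm_deriv_right_le hfc hf' ha0 bound t
      ⟨ht0, le_refl t⟩
    rw [gronwallBound_ε0] at hfin
    have hgi : ‖g i‖ ≤ 0 := by simpa [hh, hx0 i] using hfin
    exact absurd (norm_le_zero_iff.mp hgi) (hg i).ne'
  -- now deduce a - ∑ = 0
  have h2 : a - ∑ j, x t j = 0 := by
    rcases mul_eq_zero.mp hi with h | h
    · rcases mul_eq_zero.mp h with h | h
      · exact absurd h (hk i).ne'
      · exact h
    · exact absurd (sub_eq_zero.mp h).symm hne
  intro j
  rw [h2, mul_zero, zero_mul]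
end

section
/- Let x : [0, ξ) → ℝ^N be the solution of the depletion accumulation IVP x_i'(t) = k_i·(a - Σⱼ x_j(t))·(g_i - x_i(t)), x(0) = 0, with all g_i, k_i, a > 0. Then x_i'(t) > 0 for all t ∈ [0, ξ) and all i. -/
/-- A continuous function on `[0, ξ)` that is positive at `0` and never zero is positive. -/
lemma aux_pos_of_ne_zero {f : ℝ → ℝ} {ξ : ℝ} (hc : ContinuousOn f (Set.Ico 0 ξ))
    (h0 : 0 < f 0) (hne : ∀ t ∈ Set.Ico (0 : ℝ) ξ, f t ≠ 0) :
    ∀ t ∈ Set.Ico (0 : ℝ) ξ, 0 < f t := by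
  intro t ht
  rcases lt_or_gt_of_ne (hne t ht) with hlt | h
  · exfalso
    have hsub : Set.Icc (0 : ℝ) t ⊆ Set.Ico 0 ξ :=
      fun s hs => ⟨hs.1, lt_of_le_of_lt hs.2 ht.2⟩
    obtain ⟨s, hs, hfs⟩ := intermediate_value_Icc' ht.1 (hc.mono hsub)
      ⟨le_of_lt hlt, le_of_lt h0⟩
    exact hne s (hsub hs) hfs
  · exact h

theorem multi_epitope_derivs_pos
    (N : ℕ) (hN : 1 ≤ N) (g k : Fin N → ℝ) (hg : ∀ i, 0 < g i) (hk : ∀ i, 0 < k i)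
    (a : ℝ) (ha : 0 < a) (ξ : ℝ) (hξ : 0 < ξ)
    (x : ℝ → Fin N → ℝ) (hx0 : ∀ i, x 0 i = 0)
    (hode : ∀ i, ∀ t ∈ Set.Ico (0 : ℝ) ξ,
      HasDerivWithinAt (fun s => x s i)
        (k i * (a - ∑ j, x t j) * (g i - x t i)) (Set.Ico (0 : ℝ) ξ) t) :
    ∀ i, ∀ t ∈ Set.Ico (0 : ℝ) ξ, 0 < k i * (a - ∑ j, x t j) * (g i - x t i) := by
  -- continuity of the components
  have hxc : ∀ i, ContinuousOn (fun s => x s i) (Set.Ico (0 : ℝ) ξ) :=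
    fun i t ht => (hode i t ht).continuousWithinAt
  have hFc : ContinuousOn (fun s => a - ∑ j, x s j) (Set.Ico (0 : ℝ) ξ) :=
    continuousOn_const.sub (continuousOn_finset_sum _ fun j _ => hxc j)
  have hqc : ∀ i, ContinuousOn (fun s => g i - x s i) (Set.Ico (0 : ℝ) ξ) :=
    fun i => continuousOn_const.sub (hxc i)
  set u : ℝ → ℝ := fun t => (a - ∑ j, x t j) * ∏ i, (g i - x t i) with hu
  set c : ℝ → ℝ := fun t =>
    -((∑ j, k j * (g j - x t j)) + (∑ i, k i) * (a - ∑ j, x t j)) with hc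
  have huc : ContinuousOn u (Set.Ico (0 : ℝ) ξ) :=
    hFc.mul (continuousOn_finset_prod _ fun i _ => hqc i)
  have hcc : ContinuousOn c (Set.Ico (0 : ℝ) ξ) := by
    apply ContinuousOn.neg
    exact ((continuousOn_finset_sum _ fun j _ =>
      continuousOn_const.mul (hqc j))).add (continuousOn_const.mul hFc)
  -- u satisfies a linear ODE
  have hu' : ∀ t ∈ Set.Ico (0 : ℝ) ξ,
      HasDerivWithinAt u (c t * u t) (Set.Ico (0 : ℝ) ξ) t := by
    intro t ht
    have hf : HasDerivWithinAt (fun s => a - ∑ j, x s j)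
        (-(∑ j, k j * (a - ∑ l, x t l) * (g j - x t j))) (Set.Ico (0 : ℝ) ξ) t := by
      simpa using (HasDerivWithinAt.sum (fun j _ => hode j t ht)).const_sub a
    have hq : ∀ i, HasDerivWithinAt (fun s => g i - x s i)
        (-(k i * (a - ∑ l, x t l) * (g i - x t i))) (Set.Ico (0 : ℝ) ξ) t :=
      fun i => (hode i t ht).const_sub (g i)
    have hp : HasDerivWithinAt (fun s => ∏ i, (g i - x s i))
        (∑ i, (∏ j ∈ Finset.univ.erase i, (g j - x t j)) •
          (-(k i * (a - ∑ l, x t l) * (g i - x t i)))) (Set.Ico (0 : ℝ) ξ) t :=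
      HasDerivWithinAt.fun_finsetProd (fun i _ => hq i)
    have hmul := hf.mul hp
    have hPe : ∀ i : Fin N,
        (g i - x t i) * ∏ j ∈ Finset.univ.erase i, (g j - x t j) =
          ∏ j, (g j - x t j) :=
      fun i => Finset.mul_prod_erase Finset.univ (fun j => g j - x t j) (Finset.mem_univ i)
    have e2 : (∑ i, (∏ j ∈ Finset.univ.erase i, (g j - x t j)) •
        (-(k i * (a - ∑ l, x t l) * (g i - x t i))))
        = (∑ i, k i) * (-((a - ∑ l, x t l) * ∏ j, (g j - x t j))) := by
      rw [Finset.sum_mul]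
      refine Finset.sum_congr rfl fun i _ => ?_
      rw [smul_eq_mul, ← hPe i]; ring
    have e1 : (∑ j, k j * (a - ∑ l, x t l) * (g j - x t j))
        = (∑ j, k j * (g j - x t j)) * (a - ∑ l, x t l) := by
      rw [Finset.sum_mul]
      exact Finset.sum_congr rfl fun j _ => by ring
    convert hmul using 1
    case e'_4 => rfl
    case e'_5 => rfl
    case e'_8 => rfl
    rw [e2, e1, hu, hc]
    ring
  -- initial value of u is positive
  have hu0 : 0 < u 0 := by
    have : u 0 = a * ∏ i, g i := by simp [hu, hx0]
    rw [this]
    exact mul_pos ha (Finset.prod_pos fun i _ => hg i)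
  -- u never vanishes on [0, ξ)
  have hune : ∀ t ∈ Set.Ico (0 : ℝ) ξ, u t ≠ 0 := by
    intro t0 ht0 h0
    rcases eq_or_lt_of_le ht0.1 with h | h
    · rw [← h] at h0; exact absurd h0 (ne_of_gt hu0)
    have hsub : Set.Icc (0 : ℝ) t0 ⊆ Set.Ico 0 ξ :=
      fun s hs => ⟨hs.1, lt_of_le_of_lt hs.2 ht0.2⟩
    obtain ⟨K, hK⟩ := isCompact_Icc.exists_bound_of_continuousOn (hcc.mono hsub)
    set w : ℝ → ℝ := fun s => u (t0 - s) with hw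
    have hmaps : Set.MapsTo (fun s : ℝ => t0 - s) (Set.Icc 0 t0) (Set.Icc 0 t0) :=
      fun s hs => by
        simp only [Set.mem_Icc] at hs ⊢
        constructor <;> linarith [hs.1, hs.2]
    have hwc : ContinuousOn w (Set.Icc 0 t0) :=
      ((huc.mono hsub).comp (continuousOn_const.sub continuousOn_id) hmaps)
    have hw' : ∀ s ∈ Set.Ico (0 : ℝ) t0,
        HasDerivWithinAt w ((c (t0 - s) * u (t0 - s)) * (-1)) (Set.Ici s) s := by
      intro s hs
      have hus : HasDerivWithinAt u (c (t0 - s) * u (t0 - s)) (Set.Icc 0 t0) (t0 - s) :=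
        (hu' (t0 - s) (hsub ⟨by linarith [hs.2], by linarith [hs.1]⟩)).mono hsub
      have hφ : HasDerivWithinAt (fun s : ℝ => t0 - s) (-1) (Set.Icc 0 t0) s :=
        ((hasDerivAt_id s).const_sub t0).hasDerivWithinAt
      have hcomp := HasDerivWithinAt.comp s hus hφ hmaps
      refine hcomp.mono_of_mem_nhdsWithin ?_
      have h1 : Set.Iic t0 ∈ nhds s := Iic_mem_nhds hs.2
      have h2 : Set.Ici s ∩ Set.Iic t0 ∈ nhdsWithin s (Set.Ici s) :=
        inter_mem_nhdsWithin _ h1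
      refine Filter.mem_of_superset h2 fun y hy => ⟨le_trans hs.1 hy.1, hy.2⟩
    have hbound : ∀ s ∈ Set.Ico (0 : ℝ) t0,
        ‖(c (t0 - s) * u (t0 - s)) * (-1)‖ ≤ K * ‖w s‖ + 0 := by
      intro s hs
      have hmem : t0 - s ∈ Set.Icc (0 : ℝ) t0 := ⟨by linarith [hs.2], by linarith [hs.1]⟩
      have := hK (t0 - s) hmem
      rw [norm_mul, norm_neg, norm_one, mul_one, norm_mul, add_zero]
      exact mul_le_mul_of_nonneg_right this (norm_nonneg _)
    have hw0 : ‖w 0‖ ≤ 0 := by simp [hw, h0]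
    have hfin := norm_le_gronwallBound_of_norm_deriv_right_le hwc hw' hw0 hbound t0
      ⟨le_of_lt h, le_refl t0⟩
    rw [gronwallBound_ε0_δ0] at hfin
    have : w t0 = 0 := norm_le_zero_iff.mp hfin
    rw [hw] at this
    simp only [sub_self] at this
    exact (ne_of_gt hu0) this
  -- each factor is nonzero, hence positive
  have hFne : ∀ t ∈ Set.Ico (0 : ℝ) ξ, (a - ∑ j, x t j) ≠ 0 := by
    intro t ht hF
    exact hune t ht (by rw [hu]; simp [hF])
  have hqne : ∀ i, ∀ t ∈ Set.Ico (0 : ℝ) ξ, (g i - x t i) ≠ 0 := by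
    intro i t ht hq
    refine hune t ht ?_
    rw [hu]
    simp only
    rw [Finset.prod_eq_zero (Finset.mem_univ i) hq, mul_zero]
  have hFpos : ∀ t ∈ Set.Ico (0 : ℝ) ξ, 0 < a - ∑ j, x t j := by
    apply aux_pos_of_ne_zero hFc _ hFne
    simp [hx0, ha]
  have hqpos : ∀ i, ∀ t ∈ Set.Ico (0 : ℝ) ξ, 0 < g i - x t i := by
    intro i
    apply aux_pos_of_ne_zero (hqc i) _ (hqne i)
    simp [hx0, hg i]
  intro i t ht
  exact mul_pos (mul_pos (hk i) (hFpos t ht)) (hqpos i t ht)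
end

section
/- Let x : [0, ξ) → ℝ^N be the solution of the depletion accumulation IVP x_i'(t) = k_i·(a - Σⱼ x_j(t))·(g_i - x_i(t)), x(0) = 0, with all g_i, k_i, a > 0. Then for all t ∈ [0, ξ) and all i: 0 ≤ x_i(t) < min(a, g_i), and Σⱼ x_j(t) < a. -/
open Set MeasureTheory intervalIntegral

/-- If `f' = -(c · f)` on `[0, ξ)` with `c` continuous, then `f t = f 0 · exp(-∫₀ᵗ c)`. -/
lemma ode_exp_aux (ξ : ℝ) (f c : ℝ → ℝ)
    (hc : ContinuousOn c (Set.Ico 0 ξ))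
    (hf : ∀ t ∈ Set.Ico (0:ℝ) ξ,
      HasDerivWithinAt f (-(c t * f t)) (Set.Ico (0:ℝ) ξ) t) :
    ∀ t ∈ Set.Ico (0:ℝ) ξ, f t = f 0 * Real.exp (-∫ s in (0:ℝ)..t, c s) := by
  intro t ht
  obtain ⟨ht0, htξ⟩ := ht
  have hsub : Set.Icc (0:ℝ) t ⊆ Set.Ico 0 ξ := fun u hu => ⟨hu.1, lt_of_le_of_lt hu.2 htξ⟩
  set W : ℝ → ℝ := fun u => ∫ s in (0:ℝ)..u, c s with hWdef
  -- right derivative of F := f * exp ∘ W is 0 on [0, t)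
  have hFderiv : ∀ b ∈ Set.Ico (0:ℝ) t,
      HasDerivWithinAt (fun u => f u * Real.exp (W u)) 0 (Set.Ici b) b := by
    intro b hb
    have hbIco : b ∈ Set.Ico (0:ℝ) ξ := ⟨hb.1, lt_trans hb.2 htξ⟩
    have hmem : Set.Ico (0:ℝ) ξ ∈ nhdsWithin b (Set.Ici b) := by
      refine mem_nhdsWithin.2 ⟨Set.Iio ξ, isOpen_Iio, hbIco.2, ?_⟩
      exact fun u hu => ⟨le_trans hb.1 hu.2, hu.1⟩
    have hint : IntervalIntegrable c volume 0 b := by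
      apply ContinuousOn.intervalIntegrable
      apply hc.mono
      rw [Set.uIcc_of_le hb.1]
      exact fun u hu => ⟨hu.1, lt_of_le_of_lt hu.2 hbIco.2⟩
    have hmem' : Set.Ico (0:ℝ) ξ ∈ nhdsWithin b (Set.Ioi b) := by
      refine mem_nhdsWithin.2 ⟨Set.Iio ξ, isOpen_Iio, hbIco.2, ?_⟩
      exact fun u hu => ⟨le_trans hb.1 (le_of_lt hu.2), hu.1⟩
    have hmeas : StronglyMeasurableAtFilter c (nhdsWithin b (Set.Ioi b)) volume :=
      ⟨Set.Ico 0 ξ, hmem', (hc.aestronglyMeasurable measurableSet_Ico)⟩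
    have hWder : HasDerivWithinAt W (c b) (Set.Ici b) b :=
      intervalIntegral.integral_hasDerivWithinAt_right hint hmeas
        ((hc b hbIco).mono_of_mem_nhdsWithin hmem')
    have hfb : HasDerivWithinAt f (-(c b * f b)) (Set.Ici b) b :=
      (hf b hbIco).mono_of_mem_nhdsWithin hmem
    have := hfb.fun_mul hWder.exp
    refine this.congr_deriv ?_
    ring
  -- F is continuous on [0, t]
  have hfc : ContinuousOn f (Set.Icc 0 t) :=
    fun u hu => ((hf u (hsub hu)).continuousWithinAt).mono hsub
  have hWc : ContinuousOn W (Set.Icc 0 t) := by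
    have hint : IntegrableOn c (Set.uIcc 0 t) volume := by
      rw [Set.uIcc_of_le ht0]
      exact (hc.mono hsub).integrableOn_Icc
    have := intervalIntegral.continuousOn_primitive_interval hint
    rwa [Set.uIcc_of_le ht0] at this
  have hFc : ContinuousOn (fun u => f u * Real.exp (W u)) (Set.Icc 0 t) :=
    hfc.mul (Real.continuous_exp.comp_continuousOn hWc)
  have hconst := constant_of_has_deriv_right_zero hFc hFderiv t (Set.right_mem_Icc.2 ht0)
  have hW0 : W 0 = 0 := intervalIntegral.integral_same
  rw [hW0, Real.exp_zero, mul_one] at hconst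
  rw [Real.exp_neg, ← hconst, mul_assoc, mul_inv_cancel₀ (Real.exp_ne_zero _), mul_one]

theorem multi_epitope_solution_bounds
    (N : ℕ) (hN : 1 ≤ N) (g k : Fin N → ℝ) (hg : ∀ i, 0 < g i) (hk : ∀ i, 0 < k i)
    (a : ℝ) (ha : 0 < a) (ξ : ℝ) (hξ : 0 < ξ)
    (x : ℝ → Fin N → ℝ) (hx0 : ∀ i, x 0 i = 0)
    (hode : ∀ i, ∀ t ∈ Set.Ico (0 : ℝ) ξ,
      HasDerivWithinAt (fun s => x s i)
        (k i * (a - ∑ j, x t j) * (g i - x t i)) (Set.Ico (0 : ℝ) ξ) t) :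
    ∀ t ∈ Set.Ico (0 : ℝ) ξ,
      (∀ i, 0 ≤ x t i ∧ x t i < min a (g i)) ∧ (∑ j, x t j) < a := by
  -- continuity of components
  have hcx : ∀ i, ContinuousOn (fun u => x u i) (Set.Ico 0 ξ) :=
    fun i u hu => (hode i u hu).continuousWithinAt
  have hcS : ContinuousOn (fun u => ∑ j, x u j) (Set.Ico 0 ξ) :=
    continuousOn_finset_sum _ (fun j _ => hcx j)
  -- the quantity v = a - Σ xⱼ satisfies v' = -(Σ kⱼ(gⱼ - xⱼ)) v
  have hvder : ∀ t ∈ Set.Ico (0:ℝ) ξ,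
      HasDerivWithinAt (fun u => a - ∑ j, x u j)
        (-((∑ j, k j * (g j - x t j)) * (a - ∑ j, x t j))) (Set.Ico (0:ℝ) ξ) t := by
    intro t ht
    have hS : HasDerivWithinAt (fun u => ∑ j, x u j)
        (∑ j, k j * (a - ∑ j', x t j') * (g j - x t j)) (Set.Ico (0:ℝ) ξ) t :=
      HasDerivWithinAt.fun_sum (fun j _ => hode j t ht)
    have := (hasDerivWithinAt_const t _ a).fun_sub hS
    refine this.congr_deriv ?_
    rw [zero_sub, neg_inj, Finset.sum_mul]
    exact Finset.sum_congr rfl fun j _ => by ring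
  have hccS : ContinuousOn (fun u => ∑ j, k j * (g j - x u j)) (Set.Ico 0 ξ) :=
    continuousOn_finset_sum _ (fun j _ =>
      continuousOn_const.mul (continuousOn_const.sub (hcx j)))
  have hv := ode_exp_aux ξ (fun u => a - ∑ j, x u j) (fun u => ∑ j, k j * (g j - x u j))
    hccS hvder
  have hv0 : a - ∑ j, x 0 j = a := by simp [hx0]
  -- positivity of v on [0, ξ)
  have hvpos : ∀ t ∈ Set.Ico (0:ℝ) ξ, 0 < a - ∑ j, x t j := by
    intro t ht
    have := hv t ht
    simp only [hv0] at this
    rw [this]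
    positivity
  -- each uᵢ = gᵢ - xᵢ satisfies uᵢ' = -(kᵢ v) uᵢ
  intro t ht
  have key : ∀ i, x t i = g i - g i * Real.exp (-∫ s in (0:ℝ)..t,
      k i * (a - ∑ j, x s j)) := by
    intro i
    have huder : ∀ u ∈ Set.Ico (0:ℝ) ξ,
        HasDerivWithinAt (fun s => g i - x s i)
          (-((k i * (a - ∑ j, x u j)) * (g i - x u i))) (Set.Ico (0:ℝ) ξ) u := by
      intro u hu
      have := (hasDerivWithinAt_const u _ (g i)).fun_sub (hode i u hu)
      refine this.congr_deriv ?_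
      ring
    have hcc : ContinuousOn (fun u => k i * (a - ∑ j, x u j)) (Set.Ico 0 ξ) :=
      continuousOn_const.mul (continuousOn_const.sub hcS)
    have := ode_exp_aux ξ (fun s => g i - x s i) (fun u => k i * (a - ∑ j, x u j))
      hcc huder t ht
    simp only [hx0 i, sub_zero] at this
    linarith [this]
  have hWnn : ∀ i, 0 ≤ ∫ s in (0:ℝ)..t, k i * (a - ∑ j, x s j) := by
    intro i
    apply intervalIntegral.integral_nonneg ht.1
    intro u hu
    have hu' : u ∈ Set.Ico (0:ℝ) ξ := ⟨hu.1, lt_of_le_of_lt hu.2 ht.2⟩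
    exact mul_nonneg (hk i).le (hvpos u hu').le
  have hxnn : ∀ i, 0 ≤ x t i := by
    intro i
    rw [key i]
    have h1 : Real.exp (-∫ s in (0:ℝ)..t, k i * (a - ∑ j, x s j)) ≤ 1 := by
      rw [Real.exp_le_one_iff]
      linarith [hWnn i]
    nlinarith [(hg i).le]
  have hxltg : ∀ i, x t i < g i := by
    intro i
    rw [key i]
    have := Real.exp_pos (-∫ s in (0:ℝ)..t, k i * (a - ∑ j, x s j))
    nlinarith [hg i]
  have hsum : (∑ j, x t j) < a := by linarith [hvpos t ht]
  refine ⟨fun i => ⟨hxnn i, lt_min ?_ (hxltg i)⟩, hsum⟩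
  have hle : x t i ≤ ∑ j, x t j :=
    Finset.single_le_sum (fun j _ => hxnn j) (Finset.mem_univ i)
  linarith
end
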